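/- Let ω be irrational and A : ℝ/2πℤ → SL(2,ℝ) continuous. Suppose there is a continuous map v : ℝ/2πℤ → ℝ² that never vanishes and satisfies v(θ + 2πω) = A(θ)·v(θ) for all θ. Then the continuous map Z(θ) = [[v₁(θ), −v₂(θ)/d(θ)], [v₂(θ), v₁(θ)/d(θ)]], where d = v₁² + v₂², takes values in SL(2,ℝ), and B¹(θ) := Z(θ + 2πω)⁻¹ A(θ) Z(θ) is upper triangular of the form [[1, b¹₁₂(θ)], [0, 1]] for a continuous function b¹₁₂ : ℝ/2πℤ → ℝ. -/

import Mathlib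

instance : Fact (0 < 2 * Real.pi) := ⟨by positivity⟩

/-- The triangularizing transformation built from an invariant section (v₁, v₂). -/
noncomputable def Zmat (v₁ v₂ : AddCircle (2 * Real.pi) → ℝ)
    (θ : AddCircle (2 * Real.pi)) : Matrix (Fin 2) (Fin 2) ℝ :=
  !![v₁ θ, -v₂ θ / (v₁ θ ^ 2 + v₂ θ ^ 2);
     v₂ θ, v₁ θ / (v₁ θ ^ 2 + v₂ θ ^ 2)]

/-- A non-vanishing continuous invariant section of a continuous
SL(2,ℝ)-cocycle over the rotation by 2πω yields a continuous conjugation Z to an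
upper triangular unipotent cocycle. -/
theorem invariant_section_triangularizes (ω : ℝ) (hω : Irrational ω)
    (A : AddCircle (2 * Real.pi) → Matrix.SpecialLinearGroup (Fin 2) ℝ)
    (hA : Continuous fun θ => (A θ : Matrix (Fin 2) (Fin 2) ℝ))
    (v₁ v₂ : AddCircle (2 * Real.pi) → ℝ) (hv₁ : Continuous v₁) (hv₂ : Continuous v₂)
    (hnz : ∀ θ, (v₁ θ, v₂ θ) ≠ (0, 0))
    (hsec : ∀ θ : AddCircle (2 * Real.pi),
      v₁ (θ + ((2 * Real.pi * ω : ℝ) : AddCircle (2 * Real.pi)))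
          = (A θ : Matrix (Fin 2) (Fin 2) ℝ) 0 0 * v₁ θ
            + (A θ : Matrix (Fin 2) (Fin 2) ℝ) 0 1 * v₂ θ ∧
      v₂ (θ + ((2 * Real.pi * ω : ℝ) : AddCircle (2 * Real.pi)))
          = (A θ : Matrix (Fin 2) (Fin 2) ℝ) 1 0 * v₁ θ
            + (A θ : Matrix (Fin 2) (Fin 2) ℝ) 1 1 * v₂ θ) :
    (∀ θ, (Zmat v₁ v₂ θ).det = 1) ∧
    ∃ b₁₂ : AddCircle (2 * Real.pi) → ℝ, Continuous b₁₂ ∧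
      ∀ θ : AddCircle (2 * Real.pi),
        (Zmat v₁ v₂ (θ + ((2 * Real.pi * ω : ℝ) : AddCircle (2 * Real.pi))))⁻¹
            * (A θ : Matrix (Fin 2) (Fin 2) ℝ) * Zmat v₁ v₂ θ
          = !![1, b₁₂ θ; 0, 1] := by
  set c : AddCircle (2 * Real.pi) := ((2 * Real.pi * ω : ℝ) : AddCircle (2 * Real.pi)) with hc
  have hd : ∀ θ, v₁ θ ^ 2 + v₂ θ ^ 2 ≠ 0 := by
    intro θ h
    have h1 : v₁ θ = 0 ∧ v₂ θ = 0 := by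
      constructor <;> nlinarith [sq_nonneg (v₁ θ), sq_nonneg (v₂ θ)]
    exact hnz θ (by simp [h1.1, h1.2])
  have hdet : ∀ θ, (Zmat v₁ v₂ θ).det = 1 := by
    intro θ
    rw [Zmat, Matrix.det_fin_two_of]
    field_simp
    rw [div_eq_one_iff_eq (hd θ)]
    ring
  refine ⟨hdet, ?_⟩
  set b : AddCircle (2 * Real.pi) → ℝ := fun θ =>
    (v₁ (θ + c) / (v₁ (θ + c) ^ 2 + v₂ (θ + c) ^ 2) * (A θ : Matrix (Fin 2) (Fin 2) ℝ) 0 0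
        + v₂ (θ + c) / (v₁ (θ + c) ^ 2 + v₂ (θ + c) ^ 2) * (A θ : Matrix (Fin 2) (Fin 2) ℝ) 1 0)
      * (-v₂ θ / (v₁ θ ^ 2 + v₂ θ ^ 2))
    + (v₁ (θ + c) / (v₁ (θ + c) ^ 2 + v₂ (θ + c) ^ 2) * (A θ : Matrix (Fin 2) (Fin 2) ℝ) 0 1
        + v₂ (θ + c) / (v₁ (θ + c) ^ 2 + v₂ (θ + c) ^ 2) * (A θ : Matrix (Fin 2) (Fin 2) ℝ) 1 1)
      * (v₁ θ / (v₁ θ ^ 2 + v₂ θ ^ 2)) with hb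
  have hshift : Continuous fun θ : AddCircle (2 * Real.pi) => θ + c :=
    continuous_id.add continuous_const
  have hAe : ∀ i j, Continuous fun θ => (A θ : Matrix (Fin 2) (Fin 2) ℝ) i j := by
    intro i j
    exact ((continuous_apply j).comp (continuous_apply i)).comp hA
  have hdc : Continuous fun θ => v₁ θ ^ 2 + v₂ θ ^ 2 := (hv₁.pow 2).add (hv₂.pow 2)
  have hq : Continuous fun θ => v₁ (θ + c) / (v₁ (θ + c) ^ 2 + v₂ (θ + c) ^ 2) :=
    ((hv₁.comp hshift).div (hdc.comp hshift)) fun θ => hd (θ + c)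
  have hq2 : Continuous fun θ => v₂ (θ + c) / (v₁ (θ + c) ^ 2 + v₂ (θ + c) ^ 2) :=
    ((hv₂.comp hshift).div (hdc.comp hshift)) fun θ => hd (θ + c)
  have hr1 : Continuous fun θ => -v₂ θ / (v₁ θ ^ 2 + v₂ θ ^ 2) :=
    (hv₂.neg.div hdc) fun θ => hd θ
  have hr2 : Continuous fun θ => v₁ θ / (v₁ θ ^ 2 + v₂ θ ^ 2) :=
    (hv₁.div hdc) fun θ => hd θ
  have hbcont : Continuous b := by
    rw [hb]
    exact (((hq.mul (hAe 0 0)).add (hq2.mul (hAe 1 0))).mul hr1).add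
      (((hq.mul (hAe 0 1)).add (hq2.mul (hAe 1 1))).mul hr2)
  refine ⟨b, hbcont, fun θ => ?_⟩
  obtain ⟨h1, h2⟩ := hsec θ
  have hAdet : (A θ : Matrix (Fin 2) (Fin 2) ℝ) 0 0 * (A θ : Matrix (Fin 2) (Fin 2) ℝ) 1 1
      - (A θ : Matrix (Fin 2) (Fin 2) ℝ) 0 1 * (A θ : Matrix (Fin 2) (Fin 2) ℝ) 1 0 = 1 := by
    have := (A θ).2
    rwa [Matrix.det_fin_two] at this
  have hZinv : (Zmat v₁ v₂ (θ + c))⁻¹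
      = !![v₁ (θ + c) / (v₁ (θ + c) ^ 2 + v₂ (θ + c) ^ 2),
           v₂ (θ + c) / (v₁ (θ + c) ^ 2 + v₂ (θ + c) ^ 2);
           -v₂ (θ + c), v₁ (θ + c)] := by
    apply Matrix.inv_eq_left_inv
    ext i j
    fin_cases i <;> fin_cases j <;>
      · try simp [Zmat, Matrix.mul_apply, Fin.sum_univ_two]
        try field_simp [hd (θ + c)]
        try ring
  rw [hZinv]
  ext i j
  fin_cases i <;> fin_cases j
  · -- entry (0,0) = 1
    simp only [Matrix.mul_apply, Fin.sum_univ_two]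
    simp [Zmat]
    field_simp [hd (θ + c)]
    linear_combination (-(v₁ (θ + c))) * h1 - v₂ (θ + c) * h2
  · -- entry (0,1) = b θ
    simp only [Matrix.mul_apply, Fin.sum_univ_two]
    simp [Zmat, hb]
    try ring
  · -- entry (1,0) = 0
    simp only [Matrix.mul_apply, Fin.sum_univ_two]
    simp [Zmat]
    linear_combination v₂ (θ + c) * h1 - v₁ (θ + c) * h2
  · -- entry (1,1) = 1
    simp only [Matrix.mul_apply, Fin.sum_univ_two]
    simp [Zmat]
    field_simp [hd θ]
    linear_combination
      (((A θ : Matrix (Fin 2) (Fin 2) ℝ) 1 1 * v₁ θ - (A θ : Matrix (Fin 2) (Fin 2) ℝ) 1 0 * v₂ θ) * h1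
        + ((A θ : Matrix (Fin 2) (Fin 2) ℝ) 0 0 * v₂ θ - (A θ : Matrix (Fin 2) (Fin 2) ℝ) 0 1 * v₁ θ) * h2
        + (v₁ θ ^ 2 + v₂ θ ^ 2) * hAdet)
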